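/- The natural density of coprime pairs of positive integers equals 6/π²: as N → ∞, the number of pairs (a,b) with 1 ≤ a,b ≤ N and gcd(a,b) = 1, divided by N², converges to 1/ζ(2) = 6/π². Consequently π² = 6 · P₂^{-1}, where P₂ denotes this density. -/

import Mathlib

open Filter

private lemma tsum_moebius_div_sq :
    ∑' d : ℕ, (ArithmeticFunction.moebius d : ℝ) / (d : ℝ) ^ 2 = 6 / Real.pi ^ 2 := by
  have hs : (1 : ℝ) < (2 : ℂ).re := by norm_num
  have hpi : (Real.pi : ℂ) ≠ 0 := Complex.ofReal_ne_zero.mpr Real.pi_ne_zero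
  have hz : LSeries (fun n => ((ArithmeticFunction.zeta n : ℕ) : ℂ)) 2 = (Real.pi : ℂ) ^ 2 / 6 :=
    (ArithmeticFunction.LSeries_zeta_eq_riemannZeta hs).trans (by exact_mod_cast riemannZeta_two)
  have h1 := ArithmeticFunction.LSeries_zeta_mul_Lseries_moebius hs
  rw [hz] at h1
  have hmu : LSeries (fun n => ((ArithmeticFunction.moebius n : ℤ) : ℂ)) 2
      = 6 / (Real.pi : ℂ) ^ 2 := by
    field_simp at h1 ⊢
    linear_combination h1
  have hcast : ((∑' d : ℕ, (ArithmeticFunction.moebius d : ℝ) / (d : ℝ) ^ 2 : ℝ) : ℂ)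
      = LSeries (fun n => ((ArithmeticFunction.moebius n : ℤ) : ℂ)) 2 := by
    rw [Complex.ofReal_tsum, LSeries]
    congr 1
    funext n
    rcases eq_or_ne n 0 with rfl | hn
    · simp [LSeries.term_zero]
    · rw [LSeries.term_of_ne_zero hn]
      push_cast
      rw [Complex.cpow_ofNat]
  have h2 := hcast.trans hmu
  have h3 : ((∑' d : ℕ, (ArithmeticFunction.moebius d : ℝ) / (d : ℝ) ^ 2 : ℝ) : ℂ)
      = ((6 / Real.pi ^ 2 : ℝ) : ℂ) := by rw [h2]; push_cast; ring
  exact_mod_cast h3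

private lemma count_eq (N : ℕ) :
    (((Finset.Icc 1 N ×ˢ Finset.Icc 1 N).filter
        (fun t : ℕ × ℕ => Nat.gcd t.1 t.2 = 1)).card : ℤ)
      = ∑ d ∈ Finset.Icc 1 N, ArithmeticFunction.moebius d * ((N / d : ℕ) : ℤ) ^ 2 := by
  rw [Finset.card_filter]
  push_cast
  have key : ∀ t ∈ Finset.Icc 1 N ×ˢ Finset.Icc 1 N,
      (if Nat.gcd t.1 t.2 = 1 then (1:ℤ) else 0)
        = ∑ d ∈ Finset.Icc 1 N,
            (if d ∣ t.1 ∧ d ∣ t.2 then (ArithmeticFunction.moebius d : ℤ) else 0) := by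
    rintro ⟨a, b⟩ ht
    simp only [Finset.mem_product, Finset.mem_Icc] at ht
    have ha : 0 < a := ht.1.1
    have hg : Nat.gcd a b ≠ 0 := fun h => ha.ne' (Nat.eq_zero_of_gcd_eq_zero_left h)
    have hfilter : (Finset.Icc 1 N).filter (fun d => d ∣ a ∧ d ∣ b)
        = (Nat.gcd a b).divisors := by
      ext d
      simp only [Finset.mem_filter, Finset.mem_Icc, Nat.mem_divisors, Nat.dvd_gcd_iff]
      constructor
      · rintro ⟨-, hd⟩; exact ⟨hd, hg⟩
      · rintro ⟨⟨hda, hdb⟩, -⟩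
        refine ⟨⟨Nat.pos_of_dvd_of_pos hda ha, le_trans (Nat.le_of_dvd ha hda) ht.1.2⟩,
          hda, hdb⟩
    rw [← Finset.sum_filter, hfilter,
      ← ArithmeticFunction.coe_mul_zeta_apply, ArithmeticFunction.moebius_mul_coe_zeta,
      ArithmeticFunction.one_apply]
  rw [Finset.sum_congr rfl key, Finset.sum_comm]
  refine Finset.sum_congr rfl fun d hd => ?_
  rw [← Finset.sum_filter]
  have hprod : (Finset.Icc 1 N ×ˢ Finset.Icc 1 N).filter (fun t : ℕ × ℕ => d ∣ t.1 ∧ d ∣ t.2)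
      = ((Finset.Icc 1 N).filter (d ∣ ·)) ×ˢ ((Finset.Icc 1 N).filter (d ∣ ·)) := by
    rw [Finset.filter_product]
  rw [hprod, Finset.sum_const, Finset.card_product]
  have hIcc : Finset.Icc 1 N = Finset.Ioc 0 N := rfl
  rw [hIcc, Nat.Ioc_filter_dvd_card_eq_div N d, nsmul_eq_mul]
  push_cast
  ring

/-- The natural density of coprime pairs of positive integers equals
`1/ζ(2) = 6/π²`: the number of pairs `(a, b)` with `1 ≤ a, b ≤ N` and `gcd(a, b) = 1`,
divided by `N²`, converges to `6/π²` as `N → ∞`; consequently `π² = 6 · P₂⁻¹` where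
`P₂` is this density. -/
theorem density_coprime_pairs :
    Tendsto
        (fun N : ℕ =>
          (((Finset.Icc 1 N ×ˢ Finset.Icc 1 N).filter
              (fun t : ℕ × ℕ => Nat.gcd t.1 t.2 = 1)).card : ℝ) / (N : ℝ) ^ 2)
        atTop (nhds (6 / Real.pi ^ 2)) ∧
      ((∑' n : ℕ, 1 / ((n : ℝ) + 1) ^ 2)⁻¹ = 6 / Real.pi ^ 2) ∧
      Real.pi ^ 2 = 6 * (6 / Real.pi ^ 2)⁻¹ := by
  have hpi : Real.pi ≠ 0 := Real.pi_ne_zero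
  refine ⟨?_, ?_, by field_simp⟩
  · -- main density statement
    set f : ℕ → ℕ → ℝ :=
      fun N d => (ArithmeticFunction.moebius d : ℝ) * (((N / d : ℕ) : ℝ) / (N : ℝ)) ^ 2 with hf
    set g : ℕ → ℝ := fun d => (ArithmeticFunction.moebius d : ℝ) / (d : ℝ) ^ 2 with hg
    have hbound : Summable (fun d : ℕ => 1 / (d : ℝ) ^ 2) := by
      rw [Real.summable_one_div_nat_pow]
      norm_num
    -- pointwise limits
    have hab : ∀ d : ℕ, Tendsto (fun N => f N d) atTop (nhds (g d)) := by
      intro d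
      rcases eq_or_ne d 0 with rfl | hd
      · simp [hf, hg]
      have hd' : (0 : ℝ) < d := by positivity
      have hratio : Tendsto (fun N : ℕ => ((N / d : ℕ) : ℝ) / (N : ℝ)) atTop
          (nhds (1 / (d : ℝ))) := by
        have hlow : Tendsto (fun N : ℕ => 1 / (d : ℝ) - 1 / (N : ℝ)) atTop
            (nhds (1 / (d : ℝ))) := by
          simpa using ((tendsto_const_nhds (x := 1 / (d : ℝ))).sub
            (tendsto_one_div_atTop_nhds_zero_nat : Tendsto (fun n : ℕ => 1 / (n : ℝ)) atTop (nhds 0)))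
        refine tendsto_of_tendsto_of_tendsto_of_le_of_le' hlow tendsto_const_nhds ?_ ?_
        · filter_upwards [eventually_ge_atTop 1] with N hN
          have hN' : (0 : ℝ) < N := by exact_mod_cast hN
          have h1n : N < (N / d + 1) * d := by
            have h2 := Nat.div_add_mod N d
            have h3 := Nat.mod_lt N (Nat.pos_of_ne_zero hd)
            calc N = d * (N / d) + N % d := h2.symm
              _ < d * (N / d) + d := by omega
              _ = (N / d + 1) * d := by ring
          have h1 : (N : ℝ) < (((N / d : ℕ) : ℝ) + 1) * d := by exact_mod_cast h1n
          rw [sub_le_iff_le_add, ← add_div, div_le_div_iff₀ hd' hN', one_mul]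
          linarith
        · filter_upwards [eventually_ge_atTop 1] with N hN
          have hN' : (0 : ℝ) < N := by exact_mod_cast hN
          rw [div_le_div_iff₀ hN' hd']
          have h1 : ((N / d : ℕ) : ℝ) * d ≤ N := by
            exact_mod_cast Nat.div_mul_le_self N d
          linarith
      have := ((hratio.pow 2).const_mul ((ArithmeticFunction.moebius d : ℝ)))
      convert this using 1
      simp only [hg]
      field_simp
    -- bound
    have h_bound : ∀ᶠ N : ℕ in atTop, ∀ d : ℕ, ‖f N d‖ ≤ 1 / (d : ℝ) ^ 2 := by
      filter_upwards [eventually_ge_atTop 1] with N hN d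
      rcases eq_or_ne d 0 with rfl | hd
      · simp [hf]
      have hd' : (0 : ℝ) < d := by positivity
      have hN' : (0 : ℝ) < N := by exact_mod_cast hN
      have hmu : |(ArithmeticFunction.moebius d : ℝ)| ≤ 1 := by
        have := ArithmeticFunction.abs_moebius_le_one (n := d)
        exact_mod_cast this
      have hratio : ((N / d : ℕ) : ℝ) / (N : ℝ) ≤ 1 / (d : ℝ) := by
        rw [div_le_div_iff₀ hN' hd']
        have h1 : ((N / d : ℕ) : ℝ) * d ≤ N := by
          exact_mod_cast Nat.div_mul_le_self N d
        linarith
      have hnn : (0 : ℝ) ≤ ((N / d : ℕ) : ℝ) / (N : ℝ) := by positivity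
      rw [hf]
      simp only [Real.norm_eq_abs, abs_mul, abs_pow, abs_of_nonneg hnn]
      calc |(ArithmeticFunction.moebius d : ℝ)| * (((N / d : ℕ) : ℝ) / (N : ℝ)) ^ 2
          ≤ 1 * (1 / (d : ℝ)) ^ 2 := by
            apply mul_le_mul hmu (pow_le_pow_left₀ hnn hratio 2) (by positivity) one_pos.le
        _ = 1 / (d : ℝ) ^ 2 := by field_simp
    have htendsto := tendsto_tsum_of_dominated_convergence hbound hab h_bound
    have hsum : ∑' d, g d = 6 / Real.pi ^ 2 := tsum_moebius_div_sq
    rw [hsum] at htendsto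
    refine htendsto.congr' ?_
    filter_upwards [eventually_ge_atTop 1] with N hN
    have hN' : (0 : ℝ) < N := by exact_mod_cast hN
    have hsupp : ∀ d : ℕ, d ∉ Finset.Icc 1 N → f N d = 0 := by
      intro d hd
      simp only [Finset.mem_Icc, not_and_or, not_le] at hd
      rcases hd with hd | hd
      · interval_cases d
        simp [hf]
      · have : N / d = 0 := Nat.div_eq_of_lt hd
        simp [hf, this]
    rw [tsum_eq_sum hsupp]
    have hcount' := congrArg (fun z : ℤ => (z : ℝ)) (count_eq N)
    push_cast at hcount'
    rw [hcount', Finset.sum_div]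
    refine Finset.sum_congr rfl fun d hd => ?_
    rw [hf]
    field_simp
    norm_cast
    rw [Int.cast_mul, Int.cast_natCast]
  · -- ζ(2) value
    have h0 : HasSum (fun n : ℕ => 1 / ((n : ℝ) + 1) ^ 2) (Real.pi ^ 2 / 6) := by
      have h := hasSum_zeta_two
      rw [← hasSum_nat_add_iff' 1] at h
      simpa using h.congr_fun fun n => by push_cast; ring
    rw [h0.tsum_eq]
    rw [eq_div_iff (by positivity)]
    field_simp
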